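/- arXiv:2210.04179 — 2 statements merged into one kernel-verified Lean document; each statement's English description precedes it below -/
import Mathlib

section
/- If the multi-version serialization graph G(s) of a schedule s with version order ≪ is acyclic, then (s, ≪) is multi-version view serializable: there exists a serial (mono-version) schedule over the same transactions in which every transaction reads the same versions (has the same reads-from relation) as in (s, ≪). -/
/-- A directed graph (relation) is acyclic: no nonempty directed cycle. -/
def Acyclic {V : Type*} (E : V → V → Prop) : Prop :=
  ∀ v, ¬ Relation.TransGen E v v

lemma exists_strictMono_nat_of_fintype {V : Type*} [Fintype V] [LinearOrder V] :
    ∃ ord : V → ℕ, StrictMono ord := by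
  classical
  refine ⟨fun v => (Finset.univ.filter (· ≤ v)).card, ?_⟩
  intro a b hab
  apply Finset.card_lt_card
  constructor
  · intro u hu
    simp only [Finset.mem_filter, Finset.mem_univ, true_and] at hu ⊢
    exact hu.trans hab.le
  · intro hsub
    have := hsub (Finset.mem_filter.mpr ⟨Finset.mem_univ b, le_refl b⟩)
    simp only [Finset.mem_filter, Finset.mem_univ, true_and] at this
    exact absurd this (not_le.mpr hab)

/-- If the multi-version serialization graph `G(s)` of a schedule `s`
with version order `≪` is acyclic, then `(s, ≪)` is multi-version view serializable:
there is a serial (mono-version) schedule — given by an injective ranking `ord` of the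
transactions — in which every transaction reads from the same writer as in `(s, ≪)`,
i.e. whenever `T_i` reads `x` from `T_j`, `T_j` precedes `T_i` and no other writer of
`x` lies strictly between them. -/
theorem mvsg_acyclic_implies_mv_view_serializable
    {Txn Item : Type*} [Fintype Txn]
    (writes : Txn → Item → Prop)            -- T writes a version of item x
    (rf : Txn → Item → Txn → Prop)          -- rf i x j : T_i reads version x_j of x written by T_j
    (vo : Item → Txn → Txn → Prop)          -- vo x j k : version order x_j ≪ x_k
    (hrf_writes : ∀ i x j, rf i x j → writes j x)
    (hrf_ne : ∀ i x j, rf i x j → i ≠ j)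
    (hvo_total : ∀ x a b, writes a x → writes b x → a ≠ b → vo x a b ∨ vo x b a)
    (hvo_asymm : ∀ x a b, vo x a b → ¬ vo x b a)
    -- the multi-version serialization graph G(s)
    (G : Txn → Txn → Prop)
    (hG : ∀ a b, G a b ↔
      (∃ x, rf b x a) ∨                                           -- reads-from edge j → i
      (∃ x j, rf a x j ∧ writes b x ∧ b ≠ j ∧ b ≠ a ∧ vo x j b) ∨ -- edge i → k when x_j ≪ x_k
      (∃ x i, rf i x b ∧ writes a x ∧ a ≠ b ∧ a ≠ i ∧ vo x a b))  -- edge k → j when x_k ≪ x_j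
    (hacyclic : Acyclic G) :
    ∃ ord : Txn → ℕ, Function.Injective ord ∧
      ∀ i x j, rf i x j →
        ord j < ord i ∧
        ∀ k, writes k x → k ≠ j → ¬ (ord j < ord k ∧ ord k < ord i) := by
  classical
  letI P : PartialOrder Txn :=
    { le := fun a b => a = b ∨ Relation.TransGen G a b
      le_refl := fun a => Or.inl rfl
      le_trans := by
        rintro a b c (rfl | h) (rfl | h')
        · exact Or.inl rfl
        · exact Or.inr h'
        · exact Or.inr h
        · exact Or.inr (h.trans h')
      le_antisymm := by
        rintro a b (rfl | h) (h' | h'')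
        · rfl
        · rfl
        · exact h'.symm
        · exact absurd (h.trans h'') (hacyclic a) }
  letI : Fintype (LinearExtension Txn) := ‹Fintype Txn›
  obtain ⟨f, hf⟩ := exists_strictMono_nat_of_fintype (V := LinearExtension Txn)
  let g : Txn → LinearExtension Txn := toLinearExtension
  have hg_inj : Function.Injective g := fun a b h => h
  refine ⟨fun v => f (g v), hf.injective.comp hg_inj, ?_⟩
  have hedge : ∀ a b, G a b → f (g a) < f (g b) := by
    intro a b hab
    have hne : a ≠ b := by rintro rfl; exact hacyclic a (Relation.TransGen.single hab)
    have hle : a ≤ b := Or.inr (Relation.TransGen.single hab)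
    have hmono : g a ≤ g b := toLinearExtension.monotone hle
    exact hf (lt_of_le_of_ne hmono (fun h => hne (hg_inj h)))
  intro i x j hrfij
  have hji : f (g j) < f (g i) :=
    hedge j i ((hG j i).mpr (Or.inl ⟨x, hrfij⟩))
  refine ⟨hji, ?_⟩
  rintro k hk hkj ⟨h1, h2⟩
  by_cases hki : k = i
  · subst hki; exact lt_irrefl _ h2
  · rcases hvo_total x j k (hrf_writes i x j hrfij) hk (Ne.symm hkj) with h | h
    · have := hedge i k ((hG i k).mpr (Or.inr (Or.inl ⟨x, j, hrfij, hk, hkj, hki, h⟩)))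
      exact lt_asymm h2 this
    · have := hedge k j ((hG k j).mpr (Or.inr (Or.inr ⟨x, i, hrfij, hk, hkj, hki, h⟩)))
      exact lt_asymm h1 this
end

section
/- Suppose for each data item x the set of versions of x is linearly ordered by a version order ≪_x, and the serialization graph contains, for each reads-from pair (T_j writes x_j, T_i reads x_j) and each other writer T_k of x, the edge T_i → T_k when x_j ≪_x x_k and the edge T_k → T_j when x_k ≪_x x_j, plus the edge T_j → T_i. If the graph is acyclic with topological order <, then for every item x and reads-from pair as above, there is no writer T_k of x with T_j < T_k < T_i. -/
/-- Suppose for each data item `x` the versions of `x` (identified with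
their writers) are linearly ordered by a version order `≪_x`, and the serialization
graph contains, for each reads-from pair (`T_j` writes `x_j`, `T_i` reads `x_j`) and
each other writer `T_k` of `x`, the edge `T_i → T_k` when `x_j ≪_x x_k` and the edge
`T_k → T_j` when `x_k ≪_x x_j`, plus the reads-from edge `T_j → T_i`. If the graph is
acyclic with topological order given by an injective ranking `ord`, then for every
item `x` and reads-from pair, there is no writer `T_k` of `x` with
`ord j < ord k < ord i`. -/
theorem version_order_edges_forbid_intermediate_writer
    {Txn Item : Type*} [Fintype Txn]
    (writes : Txn → Item → Prop)
    (rf : Txn → Item → Txn → Prop)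
    (vo : Item → Txn → Txn → Prop)
    (G : Txn → Txn → Prop)
    (hrf_writes : ∀ i x j, rf i x j → writes j x)
    (hvo_total : ∀ x a b, writes a x → writes b x → a ≠ b → vo x a b ∨ vo x b a)
    (hvo_asymm : ∀ x a b, vo x a b → ¬ vo x b a)
    (hrf_edge : ∀ i x j, rf i x j → G j i)
    (hpost_edge : ∀ i x j k, rf i x j → writes k x → k ≠ j → k ≠ i → vo x j k → G i k)
    (hpre_edge : ∀ i x j k, rf i x j → writes k x → k ≠ j → k ≠ i → vo x k j → G k j)
    (hacyclic : Acyclic G)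
    (ord : Txn → ℕ)
    (hord_inj : Function.Injective ord)
    (hord_topo : ∀ u v, G u v → ord u < ord v) :
    ∀ i x j, rf i x j →
      ∀ k, writes k x → k ≠ j → ¬ (ord j < ord k ∧ ord k < ord i) := by
  rintro i x j hrf k hwk hkj ⟨hjk, hki⟩
  have hki' : k ≠ i := fun h => lt_irrefl _ (h ▸ hki)
  rcases hvo_total x j k (hrf_writes i x j hrf) hwk (Ne.symm hkj) with h | h
  · exact absurd (hord_topo _ _ (hpost_edge i x j k hrf hwk hkj hki' h)) (not_lt.mpr hki.le)
  · exact absurd (hord_topo _ _ (hpre_edge i x j k hrf hwk hkj hki' h)) (not_lt.mpr hjk.le)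
end
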